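/- arXiv:1711.07795 — 2 statements merged into one kernel-verified Lean document; each statement's English description precedes it below -/
import Mathlib

section
/- Let X, Y, Z be nonsingular BV algebras and let α : X → Y and β : Y → Z be canonical maps with logarithmic Jacobians r_α and r_β. Then the composition β∘α : X → Z is a canonical map, and r_β + β(r_α) is a logarithmic Jacobian for β∘α; moreover any two logarithmic Jacobians of β∘α differ by a real multiple of the unit 1_Z. -/
/-!
Common setup: real unital ℤ-graded (graded-)commutative algebras, BV Laplacians,
BV brackets, BV algebra structures, canonical maps and master actions.
-/

/-- Graded commutativity with Koszul signs: `f * g = (-1)^{|f||g|} g * f`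
for homogeneous `f`, `g`. -/
def GradedComm {X : Type*} [Ring X] [Algebra ℝ X] (𝒜 : ℤ → Submodule ℝ X) : Prop :=
  ∀ (i j : ℤ) (f g : X), f ∈ 𝒜 i → g ∈ 𝒜 j → f * g = ((-1 : ℝ) ^ (i * j)) • (g * f)

/-- `D` is a BV Laplacian on the ℤ-graded algebra `X` with grading `𝒜`:
it raises degree by `1`, is a second-order differential operator
(seven-term identity on homogeneous elements), squares to zero and kills `1`. -/
def IsBVLaplacian {X : Type*} [Ring X] [Algebra ℝ X]
    (𝒜 : ℤ → Submodule ℝ X) (D : X →ₗ[ℝ] X) : Prop :=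
  (∀ (i : ℤ) (f : X), f ∈ 𝒜 i → D f ∈ 𝒜 (i + 1)) ∧
  (∀ (i j k : ℤ) (f g h : X), f ∈ 𝒜 i → g ∈ 𝒜 j → h ∈ 𝒜 k →
    D (f * g * h) =
      -(D f * g * h) - ((-1 : ℝ) ^ i) • (f * D g * h)
        - ((-1 : ℝ) ^ (i + j)) • (f * g * D h)
        + D (f * g) * h + ((-1 : ℝ) ^ ((i + 1) * j)) • (g * D (f * h))
        + ((-1 : ℝ) ^ i) • (f * D (g * h))) ∧
  (∀ f : X, D (D f) = 0) ∧
  D 1 = 0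

/-- `Br` is the BV bracket associated with the Laplacian `D`: it is the bilinear
map given on homogeneous `f`, `g` by
`(f,g) = (-1)^{|f|} (D(fg) - (Df)g - (-1)^{|f|} f(Dg))`. -/
def IsBVBracketOf {X : Type*} [Ring X] [Algebra ℝ X]
    (𝒜 : ℤ → Submodule ℝ X) (D : X →ₗ[ℝ] X) (Br : X →ₗ[ℝ] X →ₗ[ℝ] X) : Prop :=
  ∀ (i j : ℤ) (f g : X), f ∈ 𝒜 i → g ∈ 𝒜 j →
    Br f g = ((-1 : ℝ) ^ i) • (D (f * g) - D f * g - ((-1 : ℝ) ^ i) • (f * D g))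

/-- A BV algebra structure on the ℤ-graded algebra `X` with grading `𝒜`:
graded commutativity, a BV Laplacian `Δ` and its associated BV bracket. -/
structure BVAlgebraStr (X : Type*) [Ring X] [Algebra ℝ X]
    (𝒜 : ℤ → Submodule ℝ X) where
  grcomm : GradedComm 𝒜
  Δ : X →ₗ[ℝ] X
  isBVLaplacian : IsBVLaplacian 𝒜 Δ
  bracket : X →ₗ[ℝ] X →ₗ[ℝ] X
  isBracket : IsBVBracketOf 𝒜 Δ bracket

/-- The bracket `Br` is nonsingular: its center is exactly `ℝ·1`. -/
def IsNonsingularBracket {X : Type*} [Ring X] [Algebra ℝ X]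
    (Br : X →ₗ[ℝ] X →ₗ[ℝ] X) : Prop :=
  ∀ c : X, (∀ f : X, Br f c = 0) ↔ ∃ r : ℝ, c = algebraMap ℝ X r

/-- `α` is a canonical map with logarithmic Jacobian `r`: a degree-preserving
isomorphism of unital algebras with `Δ_Y(αf) - α(Δ_X f) + (r, αf)_Y = 0`,
where `r` has degree `0`. -/
def IsCanonicalWithJacobian {X Y : Type*} [Ring X] [Algebra ℝ X] [Ring Y] [Algebra ℝ Y]
    (𝒜 : ℤ → Submodule ℝ X) (ℬ : ℤ → Submodule ℝ Y)
    (ΔX : X →ₗ[ℝ] X) (ΔY : Y →ₗ[ℝ] Y) (BrY : Y →ₗ[ℝ] Y →ₗ[ℝ] Y)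
    (α : X ≃ₐ[ℝ] Y) (r : Y) : Prop :=
  (∀ (i : ℤ) (f : X), f ∈ 𝒜 i → α f ∈ ℬ i) ∧ r ∈ ℬ 0 ∧
  (∀ f : X, ΔY (α f) - α (ΔX f) + BrY r (α f) = 0)

/-- `ξ` is an infinitesimal canonical map with logarithmic Jacobian `e`:
a degree-`0` derivation with `Δ(ξf) - ξ(Δf) + (e, f) = 0`, `e` of degree `0`. -/
def IsInfCanonicalWithJacobian {X : Type*} [Ring X] [Algebra ℝ X]
    {𝒜 : ℤ → Submodule ℝ X} (B : BVAlgebraStr X 𝒜)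
    (ξ : X →ₗ[ℝ] X) (e : X) : Prop :=
  (∀ (i : ℤ) (f : X), f ∈ 𝒜 i → ξ f ∈ 𝒜 i) ∧
  (∀ f g : X, ξ (f * g) = ξ f * g + f * ξ g) ∧
  e ∈ 𝒜 0 ∧
  (∀ f : X, B.Δ (ξ f) - ξ (B.Δ f) + B.bracket e f = 0)

/-- `S` is a BV quantum master action: a degree-`0` element satisfying the
quantum master equation `ΔS + (1/2)(S,S) = 0`. -/
def IsMasterAction {X : Type*} [Ring X] [Algebra ℝ X]
    {𝒜 : ℤ → Submodule ℝ X} (B : BVAlgebraStr X 𝒜) (S : X) : Prop :=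
  S ∈ 𝒜 0 ∧ B.Δ S + (1 / 2 : ℝ) • B.bracket S S = 0

lemma neg_one_zpow_sq (i : ℤ) : ((-1:ℝ)^i) * ((-1:ℝ)^i) = 1 := by
  rw [← zpow_add₀ (by norm_num : (-1:ℝ) ≠ 0), show i + i = 2 * i by ring, zpow_mul]
  norm_num

lemma bracket_leibniz {X : Type*} [Ring X] [Algebra ℝ X]
    {𝒜 : ℤ → Submodule ℝ X} [GradedAlgebra 𝒜] (B : BVAlgebraStr X 𝒜)
    {r : X} (hr : r ∈ 𝒜 0) {i j : ℤ} {f g : X} (hf : f ∈ 𝒜 i) (hg : g ∈ 𝒜 j) :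
    B.bracket r (f * g) = B.bracket r f * g + ((-1:ℝ)^i) • (f * B.bracket r g) := by
  obtain ⟨hdeg, h7, hsq, h1⟩ := B.isBVLaplacian
  have hfg : f * g ∈ 𝒜 (i + j) := SetLike.mul_mem_graded hf hg
  have e1 := B.isBracket 0 (i+j) r (f*g) hr hfg
  have e2 := B.isBracket 0 i r f hr hf
  have e3 := B.isBracket 0 j r g hr hg
  simp only [zpow_zero, one_smul] at e1 e2 e3
  have e7 := h7 0 i j r f g hr hf hg
  simp only [zpow_zero, one_smul, zero_add, one_mul] at e7
  have hDr : B.Δ r ∈ 𝒜 1 := by simpa using hdeg 0 r hr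
  have c1 : f * (B.Δ r * g) = ((-1:ℝ)^i) • (B.Δ r * (f * g)) := by
    rw [← mul_assoc, show f * B.Δ r = ((-1:ℝ)^(i*1)) • (B.Δ r * f) from
      B.grcomm i 1 f (B.Δ r) hf hDr, mul_one, smul_mul_assoc, mul_assoc]
  have c2 : f * (r * B.Δ g) = r * (f * B.Δ g) := by
    rw [← mul_assoc, show f * r = ((-1:ℝ)^(i*0)) • (r * f) from
      B.grcomm i 0 f r hf hr, mul_zero, zpow_zero, one_smul, mul_assoc]
  have hs := neg_one_zpow_sq i
  rw [e1, e2, e3, ← mul_assoc, e7]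
  simp only [mul_assoc, mul_sub, sub_mul, smul_sub, smul_add, smul_smul,
    mul_smul_comm, smul_mul_assoc, c1, c2, hs, one_smul]
  module

lemma bracket_intertwine {Y Z : Type*} [Ring Y] [Algebra ℝ Y] [Ring Z] [Algebra ℝ Z]
    {ℬ : ℤ → Submodule ℝ Y} [GradedAlgebra ℬ] {𝒞 : ℤ → Submodule ℝ Z} [GradedAlgebra 𝒞]
    (BY : BVAlgebraStr Y ℬ) (BZ : BVAlgebraStr Z 𝒞)
    (β : Y ≃ₐ[ℝ] Z) (rb : Z)
    (hβ : IsCanonicalWithJacobian ℬ 𝒞 BY.Δ BZ.Δ BZ.bracket β rb) :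
    ∀ u v : Y, β (BY.bracket u v) = BZ.bracket (β u) (β v) := by
  obtain ⟨hdegβ, hrb, heq⟩ := hβ
  have dcomp : ∀ w : Y, BZ.Δ (β w) = β (BY.Δ w) - BZ.bracket rb (β w) := by
    intro w
    have h := heq w
    rw [sub_add_eq_add_sub, sub_eq_zero] at h
    exact eq_sub_of_add_eq h
  have key : ∀ (i j : ℤ) (u v : Y), u ∈ ℬ i → v ∈ ℬ j →
      β (BY.bracket u v) = BZ.bracket (β u) (β v) := by
    intro i j u v hu hv
    have hβu : β u ∈ 𝒞 i := hdegβ i u hu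
    have hβv : β v ∈ 𝒞 j := hdegβ j v hv
    have eY := BY.isBracket i j u v hu hv
    have eZ := BZ.isBracket i j (β u) (β v) hβu hβv
    have lb : BZ.bracket rb (β (u*v)) =
        BZ.bracket rb (β u) * β v + ((-1:ℝ)^i) • (β u * BZ.bracket rb (β v)) := by
      rw [map_mul]; exact bracket_leibniz BZ hrb hβu hβv
    have hs := neg_one_zpow_sq i
    rw [eY, eZ, show β u * β v = β (u*v) from (map_mul β u v).symm,
      dcomp (u*v), dcomp u, dcomp v, lb]
    simp only [map_smul, map_sub, map_mul]
    simp only [mul_sub, sub_mul, smul_sub, smul_add, smul_smul, hs, one_smul]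
    module
  have step2 : ∀ (i : ℤ) (u : Y), u ∈ ℬ i →
      ∀ v : Y, β (BY.bracket u v) = BZ.bracket (β u) (β v) := by
    intro i u hu v
    refine DirectSum.Decomposition.inductionOn
      (motive := fun v => β (BY.bracket u v) = BZ.bracket (β u) (β v)) ℬ
      ?_ (fun {j} m' => key i j u m' hu m'.2) (fun a b ha hb => ?_) v
    · simp
    · simp only [map_add, ha, hb]
  intro u v
  refine DirectSum.Decomposition.inductionOn
    (motive := fun u => β (BY.bracket u v) = BZ.bracket (β u) (β v)) ℬ
    ?_ (fun {i} m => step2 i m m.2 v) (fun a b ha hb => ?_) u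
  · simp
  · simp only [map_add, LinearMap.add_apply, ha, hb]

lemma bracket_center_symm {X : Type*} [Ring X] [Algebra ℝ X]
    {𝒜 : ℤ → Submodule ℝ X} [GradedAlgebra 𝒜] (B : BVAlgebraStr X 𝒜)
    {c : X} (hc : c ∈ 𝒜 0) (h : ∀ g : X, B.bracket c g = 0) :
    ∀ f : X, B.bracket f c = 0 := by
  have key : ∀ (i : ℤ) (f : X), f ∈ 𝒜 i → B.bracket f c = 0 := by
    intro i f hf
    have e1 := B.isBracket i 0 f c hf hc
    have e2 := B.isBracket 0 i c f hc hf
    simp only [zpow_zero, one_smul] at e2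
    rw [h f] at e2
    have hΔf : B.Δ f ∈ 𝒜 (i+1) := B.isBVLaplacian.1 i f hf
    have hΔc : B.Δ c ∈ 𝒜 1 := by simpa using B.isBVLaplacian.1 0 c hc
    have c1 : f * c = c * f := by simpa using B.grcomm i 0 f c hf hc
    have c2 : B.Δ f * c = c * B.Δ f := by simpa using B.grcomm (i+1) 0 (B.Δ f) c hΔf hc
    have c3 : f * B.Δ c = ((-1:ℝ)^i) • (B.Δ c * f) := by
      simpa using B.grcomm i 1 f (B.Δ c) hf hΔc
    have hs := neg_one_zpow_sq i
    rw [e1, c1, c2, c3, smul_smul, hs, one_smul]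
    have h0 : B.Δ (c * f) - c * B.Δ f - B.Δ c * f = 0 := by
      rw [show B.Δ (c * f) - c * B.Δ f - B.Δ c * f
          = B.Δ (c * f) - B.Δ c * f - c * B.Δ f from by abel, ← e2]
    rw [h0, smul_zero]
  intro f
  refine DirectSum.Decomposition.inductionOn (motive := fun f => B.bracket f c = 0) 𝒜
    ?_ (fun {i} m => key i m m.2) (fun a b ha hb => ?_) f
  · simp
  · simp only [map_add, LinearMap.add_apply, ha, hb, add_zero]
/-- composition of canonical maps is canonical, with logarithmic
Jacobian `r_β + β(r_α)`, unique up to a real multiple of the unit. -/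
theorem stmt4 {X Y Z : Type*} [Ring X] [Algebra ℝ X] [Ring Y] [Algebra ℝ Y]
    [Ring Z] [Algebra ℝ Z]
    (𝒜 : ℤ → Submodule ℝ X) [GradedAlgebra 𝒜]
    (ℬ : ℤ → Submodule ℝ Y) [GradedAlgebra ℬ]
    (𝒞 : ℤ → Submodule ℝ Z) [GradedAlgebra 𝒞]
    (BX : BVAlgebraStr X 𝒜) (BY : BVAlgebraStr Y ℬ) (BZ : BVAlgebraStr Z 𝒞)
    (hX : IsNonsingularBracket BX.bracket) (hY : IsNonsingularBracket BY.bracket)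
    (hZ : IsNonsingularBracket BZ.bracket)
    (α : X ≃ₐ[ℝ] Y) (β : Y ≃ₐ[ℝ] Z) (ra : Y) (rb : Z)
    (hα : IsCanonicalWithJacobian 𝒜 ℬ BX.Δ BY.Δ BY.bracket α ra)
    (hβ : IsCanonicalWithJacobian ℬ 𝒞 BY.Δ BZ.Δ BZ.bracket β rb) :
    IsCanonicalWithJacobian 𝒜 𝒞 BX.Δ BZ.Δ BZ.bracket (α.trans β) (rb + β ra) ∧
    (∀ r r' : Z,
      IsCanonicalWithJacobian 𝒜 𝒞 BX.Δ BZ.Δ BZ.bracket (α.trans β) r →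
      IsCanonicalWithJacobian 𝒜 𝒞 BX.Δ BZ.Δ BZ.bracket (α.trans β) r' →
      ∃ c : ℝ, r - r' = algebraMap ℝ Z c) := by
  have itwβ := bracket_intertwine BY BZ β rb hβ
  obtain ⟨hdα, hra0, heqα⟩ := hα
  obtain ⟨hdβ, hrb0, heqβ⟩ := hβ
  constructor
  · refine ⟨fun i f hf => hdβ i (α f) (hdα i f hf),
      add_mem hrb0 (hdβ 0 ra hra0), fun f => ?_⟩
    simp only [AlgEquiv.trans_apply]
    have h1 := heqβ (α f)
    have h2 : β (BY.Δ (α f)) - β (α (BX.Δ f)) + BZ.bracket (β ra) (β (α f)) = 0 := by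
      have := congrArg β (heqα f)
      simpa only [map_add, map_sub, map_zero, itwβ] using this
    rw [map_add, LinearMap.add_apply,
      show BZ.Δ (β (α f)) - β (α (BX.Δ f))
          + (BZ.bracket rb (β (α f)) + BZ.bracket (β ra) (β (α f)))
        = (BZ.Δ (β (α f)) - β (BY.Δ (α f)) + BZ.bracket rb (β (α f)))
          + (β (BY.Δ (α f)) - β (α (BX.Δ f)) + BZ.bracket (β ra) (β (α f))) from by abel,
      h1, h2, add_zero]
  · intro r r' h h'
    obtain ⟨hd, hr0, heqr⟩ := h
    obtain ⟨_, hr'0, heqr'⟩ := h'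
    have hz : ∀ g : Z, BZ.bracket (r - r') g = 0 := by
      intro g
      set f := (α.trans β).symm g with hf
      have hg : (α.trans β) f = g := (α.trans β).apply_symm_apply g
      have k1 := heqr f
      have k2 := heqr' f
      rw [hg, sub_add_eq_add_sub, sub_eq_zero] at k1 k2
      have : BZ.bracket r g = BZ.bracket r' g := by
        have e1 := eq_sub_of_add_eq' k1
        have e2 := eq_sub_of_add_eq' k2
        rw [e1, e2]
      rw [map_sub, LinearMap.sub_apply, this, sub_self]
    exact (hZ (r - r')).mp (bracket_center_symm BZ (sub_mem hr0 hr'0) hz)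
end

section
/- Let Δ₀ be a BV Laplacian on the graded commutative algebra X with associated BV bracket (−,−)₀, let a ∈ X be a degree-0 element with Δ₀a + (1/2)(a,a)₀ = 0, let α : X → X be an invertible degree-preserving morphism of unital graded algebras, and set Δ_{αa} = α∘(Δ₀ + (a,−)₀)∘α⁻¹. Then the BV bracket (−,−)_{αa} associated with the BV Laplacian Δ_{αa} satisfies (f,g)_{αa} = α((α⁻¹f, α⁻¹g)₀) for all f, g ∈ X; in particular the BV bracket associated with Δ₀ + (a,−)₀ equals (−,−)₀. -/
section BVAux

variable {X : Type*} [Ring X] [Algebra ℝ X] {𝒜 : ℤ → Submodule ℝ X}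

lemma bv_leibniz0 [GradedAlgebra 𝒜] (B : BVAlgebraStr X 𝒜) {a : X} (ha : a ∈ 𝒜 0)
    {j k : ℤ} {f g : X} (hf : f ∈ 𝒜 j) (hg : g ∈ 𝒜 k) :
    B.bracket a (f * g) = B.bracket a f * g + ((-1 : ℝ) ^ j) • (f * B.bracket a g) := by
  obtain ⟨hd, h7, -, -⟩ := B.isBVLaplacian
  have hfg : f * g ∈ 𝒜 (j + k) := SetLike.mul_mem_graded hf hg
  have e1 := B.isBracket 0 (j + k) a (f * g) ha hfg
  have e2 := B.isBracket 0 j a f ha hf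
  have e3 := B.isBracket 0 k a g ha hg
  have e7 := h7 0 j k a f g ha hf hg
  have hΔa : B.Δ a ∈ 𝒜 1 := by simpa using hd 0 a ha
  have c1 : f * B.Δ a = ((-1 : ℝ) ^ j) • (B.Δ a * f) := by
    simpa using B.grcomm j 1 f (B.Δ a) hf hΔa
  have c0 : f * a = a * f := by simpa using B.grcomm j 0 f a hf ha
  simp only [zpow_zero, one_smul, zero_add, one_mul] at e1 e2 e3 e7
  rw [e1, e2, e3, show a * (f * g) = a * f * g from (mul_assoc a f g).symm, e7]
  simp only [sub_mul, mul_sub, ← mul_assoc, c0]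
  have c1' : f * B.Δ a * g = ((-1 : ℝ) ^ j) • (B.Δ a * f * g) := by
    rw [c1, smul_mul_assoc]
  rw [c1']
  have hs : (-1 : ℝ) ^ j = 1 ∨ (-1 : ℝ) ^ j = -1 := by
    rcases Int.even_or_odd j with h | h
    · exact Or.inl (h.neg_one_zpow)
    · exact Or.inr (h.neg_one_zpow)
  rcases hs with h | h <;> rw [h] <;> match_scalars <;> ring

lemma bv_twist_formula [GradedAlgebra 𝒜] (B : BVAlgebraStr X 𝒜) {a : X} (ha : a ∈ 𝒜 0)
    {i j : ℤ} {f g : X} (hf : f ∈ 𝒜 i) (hg : g ∈ 𝒜 j) :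
    ((-1 : ℝ) ^ i) • ((B.Δ + B.bracket a) (f * g) - (B.Δ + B.bracket a) f * g
      - ((-1 : ℝ) ^ i) • (f * (B.Δ + B.bracket a) g)) = B.bracket f g := by
  have h2 := B.isBracket i j f g hf hg
  have hl := bv_leibniz0 B ha hf hg
  rw [h2]
  simp only [LinearMap.add_apply]
  rw [hl]
  simp only [add_mul, mul_add]
  module

set_option maxHeartbeats 2000000 in
set_option synthInstance.maxHeartbeats 1000000 in
lemma bv_decompose_comm [GradedAlgebra 𝒜] (α : X ≃ₐ[ℝ] X)
    (hdeg : ∀ (i : ℤ) (f : X), f ∈ 𝒜 i → α f ∈ 𝒜 i) (i : ℤ) :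
    ∀ x : X, (DirectSum.decompose 𝒜 (α x) i : X) = α (DirectSum.decompose 𝒜 x i) := by
  refine DirectSum.Decomposition.inductionOn 𝒜 ?_ ?_ ?_
  · simp only [map_zero, DirectSum.decompose_zero, DirectSum.zero_apply,
      ZeroMemClass.coe_zero]
  · intro j m
    obtain ⟨m, hm⟩ := m
    by_cases hij : j = i
    · subst hij
      rw [DirectSum.decompose_of_mem_same 𝒜 hm,
        DirectSum.decompose_of_mem_same 𝒜 (hdeg j m hm)]
    · rw [DirectSum.decompose_of_mem_ne 𝒜 hm hij,
        DirectSum.decompose_of_mem_ne 𝒜 (hdeg j m hm) hij, map_zero]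
  · intro x y hx hy
    simp only [map_add, DirectSum.decompose_add, DirectSum.add_apply, Submodule.coe_add, hx, hy]

lemma bv_symm_mem [GradedAlgebra 𝒜] (α : X ≃ₐ[ℝ] X)
    (hdeg : ∀ (i : ℤ) (f : X), f ∈ 𝒜 i → α f ∈ 𝒜 i)
    {i : ℤ} {f : X} (hf : f ∈ 𝒜 i) : α.symm f ∈ 𝒜 i := by
  have h := bv_decompose_comm α hdeg i (α.symm f)
  rw [α.apply_symm_apply, DirectSum.decompose_of_mem_same 𝒜 hf] at h
  have h2 : α.symm f = (DirectSum.decompose 𝒜 (α.symm f) i : X) := by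
    conv_lhs => rw [h, α.symm_apply_apply]
  rw [h2]
  exact SetLike.coe_mem _

lemma bv_bilin_ext [GradedAlgebra 𝒜] (T : X →ₗ[ℝ] X →ₗ[ℝ] X)
    (S : X →ₗ[ℝ] X →ₗ[ℝ] X) (A C : X →ₗ[ℝ] X)
    (h : ∀ (i j : ℤ) (f g : X), f ∈ 𝒜 i → g ∈ 𝒜 j → T f g = A (S (C f) (C g))) :
    ∀ f g : X, T f g = A (S (C f) (C g)) := by
  refine DirectSum.Decomposition.inductionOn 𝒜 ?_ ?_ ?_
  · intro g
    simp only [map_zero, LinearMap.zero_apply]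
  · intro i m
    obtain ⟨f, hf⟩ := m
    refine DirectSum.Decomposition.inductionOn 𝒜 ?_ ?_ ?_
    · simp only [map_zero, LinearMap.zero_apply]
    · intro j m'
      obtain ⟨g, hg⟩ := m'
      exact h i j f g hf hg
    · intro g₁ g₂ h₁ h₂
      simp only [map_add, h₁, h₂]
  · intro f₁ f₂ h₁ h₂ g
    simp only [map_add, LinearMap.add_apply, h₁, h₂]

end BVAux

/-- the BV bracket of the conjugated twisted Laplacian
`Δ_{αa} = α ∘ (Δ₀ + (a,-)₀) ∘ α⁻¹` is the conjugate of `(-,-)₀`; in particular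
the bracket of `Δ₀ + (a,-)₀` is `(-,-)₀` itself. -/



theorem stmt12 {X : Type*} [Ring X] [Algebra ℝ X]
    (𝒜 : ℤ → Submodule ℝ X) [GradedAlgebra 𝒜] (B : BVAlgebraStr X 𝒜)
    (a : X) (ha : a ∈ 𝒜 0)
    (hma : B.Δ a + (1 / 2 : ℝ) • B.bracket a a = 0)
    (α : X ≃ₐ[ℝ] X) (hdeg : ∀ (i : ℤ) (f : X), f ∈ 𝒜 i → α f ∈ 𝒜 i) :
    (∀ Br : X →ₗ[ℝ] X →ₗ[ℝ] X,
      IsBVBracketOf 𝒜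
        (α.toLinearMap.comp ((B.Δ + B.bracket a).comp α.symm.toLinearMap)) Br →
      ∀ f g : X, Br f g = α (B.bracket (α.symm f) (α.symm g))) ∧
    (∀ Br : X →ₗ[ℝ] X →ₗ[ℝ] X,
      IsBVBracketOf 𝒜 (B.Δ + B.bracket a) Br → Br = B.bracket) := by
  constructor
  · intro Br hBr
    have key : ∀ (i j : ℤ) (f g : X), f ∈ 𝒜 i → g ∈ 𝒜 j →
        Br f g = α.toLinearMap (B.bracket (α.symm.toLinearMap f) (α.symm.toLinearMap g)) := by
      intro i j f g hf hg
      have hf' : α.symm f ∈ 𝒜 i := bv_symm_mem α hdeg hf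
      have hg' : α.symm g ∈ 𝒜 j := bv_symm_mem α hdeg hg
      have h1 := hBr i j f g hf hg
      have hsm : ∀ (r : ℝ) (x : X), r • α x = α (r • x) := fun r x => (α.toLinearMap.map_smul r x).symm
      simp only [LinearMap.comp_apply, AlgEquiv.toLinearMap_apply] at h1 ⊢
      rw [h1, show α.symm (f * g) = α.symm f * α.symm g from map_mul α.symm f g,
        show α ((B.Δ + B.bracket a) (α.symm f)) * g
            = α ((B.Δ + B.bracket a) (α.symm f) * α.symm g) by
          rw [map_mul, α.apply_symm_apply],
        show f * α ((B.Δ + B.bracket a) (α.symm g))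
            = α (α.symm f * (B.Δ + B.bracket a) (α.symm g)) by
          rw [map_mul, α.apply_symm_apply],
        hsm, ← map_sub, ← map_sub, hsm]
      exact congrArg α (bv_twist_formula B ha hf' hg')
    exact bv_bilin_ext Br B.bracket α.toLinearMap α.symm.toLinearMap key
  · intro Br hBr
    have key : ∀ (i j : ℤ) (f g : X), f ∈ 𝒜 i → g ∈ 𝒜 j →
        Br f g = (LinearMap.id : X →ₗ[ℝ] X) (B.bracket ((LinearMap.id : X →ₗ[ℝ] X) f) ((LinearMap.id : X →ₗ[ℝ] X) g)) := by
      intro i j f g hf hg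
      simp only [LinearMap.id_apply]
      rw [hBr i j f g hf hg]
      exact bv_twist_formula B ha hf hg
    have h := bv_bilin_ext Br B.bracket (LinearMap.id : X →ₗ[ℝ] X) (LinearMap.id : X →ₗ[ℝ] X) key
    ext f g
    simpa using h f g
end
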